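/- Let P be a finite-dimensional indecomposable basic symmetric ℂ-algebra with symmetric linear functional φ, Rad(φ) = 0, and orthogonal primitive idempotents e_1,...,e_k summing to 1. If P has two isomorphic minimal two-sided ideals M and N with M ≠ N, then L = {(a,b) ∈ M ⊕ N : φ(a) + φ(b) = 0} yields a nonzero two-sided ideal of P annihilated by φ, contradicting Rad(φ) = 0; hence distinct minimal two-sided ideals of P are pairwise non-isomorphic as P-bimodules. -/

import Mathlib

private lemma jac_mul_right' {R : Type*} [Ring R] {x : R}
    (hx : x ∈ Ideal.jacobson (⊥ : Ideal R)) (y : R) :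
    x * y ∈ Ideal.jacobson (⊥ : Ideal R) :=
  by rw [Ideal.jacobson_bot] at hx ⊢; exact Ideal.mul_mem_right y _ hx

private lemma jac_left_inv' {R : Type*} [Ring R] {x : R}
    (hx : x ∈ Ideal.jacobson (⊥ : Ideal R)) :
    ∃ z : R, z * (1 - x) = 1 := by
  obtain ⟨z, hz⟩ := Ideal.mem_jacobson_iff.1 hx (-1)
  rw [Ideal.mem_bot, sub_eq_zero] at hz
  refine ⟨z, ?_⟩
  rw [mul_sub, mul_one]
  rw [mul_neg_one, neg_mul, neg_add_eq_sub] at hz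
  exact hz

/-- Noncommutative Nakayama: a finitely generated (by `s`) submodule `N` of `R`
with `N ≤ J • N` (`J` the Jacobson radical) is trivial. -/
private lemma nakayama_nc {R : Type*} [Ring R] :
    ∀ (n : ℕ) (s : Finset R) (N : Submodule R R), s.card = n →
      Submodule.span R (s : Set R) = N →
      N ≤ Ideal.jacobson (⊥ : Ideal R) • N → N = ⊥ := by
  intro n
  induction n with
  | zero =>
    intro s N hcard hspan _
    rw [Finset.card_eq_zero] at hcard
    subst hcard
    rw [← hspan, Finset.coe_empty, Submodule.span_empty]
  | succ n ih =>
    classical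
    intro s N hcard hspan hle
    obtain ⟨x, hx⟩ : s.Nonempty := Finset.card_pos.mp (by omega)
    have hxN : x ∈ N := hspan ▸ Submodule.subset_span hx
    have hrep : ∃ b : R → R, (∀ y, b y ∈ Ideal.jacobson (⊥ : Ideal R)) ∧
        x = ∑ y ∈ s, b y * y := by
      have hx2 : x ∈ Ideal.jacobson (⊥ : Ideal R) • N := hle hxN
      refine Submodule.smul_induction_on hx2 ?_ ?_
      · intro r hr z hz
        rw [← hspan] at hz
        obtain ⟨g, -, hg⟩ := Submodule.mem_span_finset.1 hz
        refine ⟨fun y => r * g y, fun y => jac_mul_right' hr _, ?_⟩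
        rw [smul_eq_mul, ← hg, Finset.mul_sum]
        exact Finset.sum_congr rfl fun y _ => by rw [smul_eq_mul, mul_assoc]
      · rintro a b ⟨ba, hba, rfl⟩ ⟨bb, hbb, rfl⟩
        exact ⟨fun y => ba y + bb y,
          fun y => Ideal.add_mem _ (hba y) (hbb y), by
            rw [← Finset.sum_add_distrib]
            exact Finset.sum_congr rfl fun y _ => (add_mul _ _ _).symm⟩
    obtain ⟨b, hbJ, hbx⟩ := hrep
    obtain ⟨z, hzinv⟩ := jac_left_inv' (hbJ x)
    have hbx2 : x = b x * x + ∑ y ∈ s.erase x, b y * y := by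
      conv_lhs => rw [hbx]
      exact (Finset.add_sum_erase s (fun y => b y * y) hx).symm
    have h1 : (1 - b x) * x = ∑ y ∈ s.erase x, b y * y := by
      rw [sub_mul, one_mul]
      nth_rewrite 1 [hbx2]
      abel
    have hxw : x = z * (∑ y ∈ s.erase x, b y * y) := by
      calc x = 1 * x := (one_mul x).symm
        _ = z * (1 - b x) * x := by rw [hzinv]
        _ = z * ((1 - b x) * x) := mul_assoc _ _ _
        _ = _ := by rw [h1]
    have hxmem : x ∈ Submodule.span R ((s.erase x : Finset R) : Set R) := by
      have hwmem : (∑ y ∈ s.erase x, b y * y) ∈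
          Submodule.span R ((s.erase x : Finset R) : Set R) := by
        refine Submodule.sum_mem _ fun y hy => ?_
        have hy' : y ∈ Submodule.span R ((s.erase x : Finset R) : Set R) :=
          Submodule.subset_span (by exact_mod_cast hy)
        exact Submodule.smul_mem _ (b y) hy'
      have h2 : z * (∑ y ∈ s.erase x, b y * y) ∈
          Submodule.span R ((s.erase x : Finset R) : Set R) :=
        Submodule.smul_mem _ z hwmem
      rwa [← hxw] at h2
    have hspan' : Submodule.span R ((s.erase x : Finset R) : Set R) = N := by
      apply le_antisymm
      · rw [← hspan]
        exact Submodule.span_mono (by exact_mod_cast s.erase_subset x)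
      · rw [← hspan]
        rw [Submodule.span_le]
        intro y hy
        rcases eq_or_ne y x with rfl | hne
        · exact hxmem
        · exact Submodule.subset_span (by
            simp only [Finset.coe_erase, Set.mem_diff, Set.mem_singleton_iff]
            exact ⟨by exact_mod_cast hy, hne⟩)
    exact ih (s.erase x) N (by simp [Finset.card_erase_of_mem hx, hcard]) hspan' hle

theorem stmt_4 {P : Type*} [Ring P] [Algebra ℂ P] [FiniteDimensional ℂ P]
    (φ : P →ₗ[ℂ] ℂ) (hsymm : ∀ a b : P, φ (a * b) = φ (b * a))
    (hrad : ∀ a : P, (∀ x y : P, φ (x * a * y) = 0) → a = 0)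
    (k : ℕ) (e : Fin k → P)
    (hidem : ∀ i, e i * e i = e i)
    (horth : ∀ i j, i ≠ j → e i * e j = 0)
    (hsum : ∑ i, e i = 1)
    (hprim : ∀ i, ∀ f : P, f * f = f → f * e i = f → e i * f = f → f = 0 ∨ f = e i)
    (hbasic : ∀ a : P, ∃ c : Fin k → ℂ,
      a - ∑ i, c i • e i ∈ Ideal.jacobson (⊥ : Ideal P))
    (hindec : ∀ c : P, (∀ p : P, c * p = p * c) → c * c = c → c = 0 ∨ c = 1)
    (M N : TwoSidedIdeal P) (hM : IsAtom M) (hN : IsAtom N) (hMN : M ≠ N) :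
    ¬ ∃ f : P →ₗ[ℂ] P,
        (f '' (M : Set P) = (N : Set P)) ∧ Set.InjOn f (M : Set P) ∧
        (∀ m ∈ M, ∀ p : P, f (p * m) = p * f m ∧ f (m * p) = f m * p) := by
  rintro ⟨f, hfim, hfinj, hfbi⟩
  set J : Ideal P := Ideal.jacobson (⊥ : Ideal P) with hJdef
  set Mi : Ideal P := TwoSidedIdeal.asIdeal M with hMidef
  have hMiMem : ∀ {x : P}, x ∈ Mi ↔ x ∈ M := fun {x} => TwoSidedIdeal.mem_asIdeal
  -- the two-sided ideal generated by J•M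
  have Kleft : ∀ {x y : P}, y ∈ (J • Mi : Ideal P) → x * y ∈ (J • Mi : Ideal P) := by
    intro x y hy
    simpa [smul_eq_mul] using Submodule.smul_mem (J • Mi) x hy
  have Kright : ∀ {x y : P}, x ∈ (J • Mi : Ideal P) → x * y ∈ (J • Mi : Ideal P) := by
    intro x y hx
    refine Submodule.smul_induction_on (p := fun a => a * y ∈ (J • Mi : Ideal P)) hx ?_ ?_
    · intro r hr m hm
      show r * m * y ∈ (J • Mi : Ideal P)
      rw [mul_assoc]
      exact Submodule.smul_mem_smul hr (hMiMem.2 (M.mul_mem_right _ _ (hMiMem.1 hm)))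
    · intro a b ha hb
      rw [add_mul]
      exact Submodule.add_mem _ ha hb
  set K : TwoSidedIdeal P := TwoSidedIdeal.mk' (J • Mi : Ideal P)
    (Submodule.zero_mem _) (fun {a b} ha hb => Submodule.add_mem _ ha hb)
    (fun {a} ha => Submodule.neg_mem _ ha) (fun {x y} hy => Kleft hy)
    (fun {x y} hx => Kright hx) with hKdef
  have hKmem : ∀ {x : P}, x ∈ K ↔ x ∈ (J • Mi : Ideal P) := by
    intro x; rw [hKdef, TwoSidedIdeal.mem_mk']; rfl
  have hKM : K ≤ M := by
    rw [TwoSidedIdeal.le_iff]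
    intro x hx
    have hx' : x ∈ (J • Mi : Ideal P) := hKmem.1 hx
    refine Submodule.smul_induction_on (p := fun a => a ∈ (M : Set P)) hx' ?_ ?_
    · intro r _ m hm
      rw [smul_eq_mul]
      exact M.mul_mem_left _ _ (hMiMem.1 hm)
    · intro a b ha hb
      exact M.add_mem ha hb
  have hJM : ∀ j ∈ J, ∀ m ∈ M, j * m = 0 := by
    rcases hM.le_iff.1 hKM with hK | hK
    · intro j hj m hm
      have : j * m ∈ K := hKmem.2 (by
        simpa [smul_eq_mul] using Submodule.smul_mem_smul hj (hMiMem.2 hm))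
      rw [hK] at this
      exact (TwoSidedIdeal.mem_bot P).1 this
    · -- K = M leads to a contradiction via Nakayama
      exfalso
      have hle : Mi ≤ (J • Mi : Ideal P) := by
        intro x hx
        exact hKmem.1 (hK ▸ hMiMem.1 hx : x ∈ K)
      have : IsNoetherian P P := isNoetherian_of_tower ℂ inferInstance
      obtain ⟨s, hs⟩ := IsNoetherian.noetherian Mi
      have hMibot : Mi = ⊥ := nakayama_nc s.card s Mi rfl hs hle
      apply hM.1
      apply eq_bot_iff.2
      rw [TwoSidedIdeal.le_iff]
      intro x hx
      have : x ∈ Mi := hMiMem.2 hx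
      rw [hMibot, Ideal.mem_bot] at this
      exact (TwoSidedIdeal.mem_bot P).2 this
  have hMJ : ∀ m ∈ M, ∀ j ∈ J, m * j = 0 := by
    intro m hm j hj
    apply hrad
    intro x y
    rw [← mul_assoc x m j, mul_assoc (x * m) j y, hsymm, mul_assoc j y (x * m),
      hJM j hj _ (M.mul_mem_left _ _ (M.mul_mem_left _ _ hm)), map_zero]
  -- pick a nonzero element of M of the form e i * m0 * e j
  have hMne : ∃ m ∈ M, m ≠ 0 := by
    by_contra h
    push_neg at h
    apply hM.1
    apply eq_bot_iff.2
    rw [TwoSidedIdeal.le_iff]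
    intro x hx
    exact (TwoSidedIdeal.mem_bot P).2 (h x hx)
  obtain ⟨m0, hm0M, hm0⟩ := hMne
  have hdecomp : m0 = ∑ i, ∑ j, e i * m0 * e j := by
    calc m0 = 1 * m0 * 1 := by rw [one_mul, mul_one]
      _ = (∑ i, e i) * m0 * (∑ j, e j) := by rw [hsum]
      _ = ∑ i, e i * m0 * (∑ j, e j) := by rw [Finset.sum_mul, Finset.sum_mul]
      _ = ∑ i, ∑ j, e i * m0 * e j := by
          exact Finset.sum_congr rfl fun i _ => by rw [Finset.mul_sum]
  have hex : ∃ i j, e i * m0 * e j ≠ 0 := by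
    by_contra h
    push_neg at h
    apply hm0
    rw [hdecomp]
    exact Finset.sum_eq_zero fun i _ => Finset.sum_eq_zero fun j _ => h i j
  obtain ⟨i, j, hu0⟩ := hex
  set u : P := e i * m0 * e j with hu
  have huM : u ∈ M := M.mul_mem_right _ _ (M.mul_mem_left _ _ hm0M)
  -- left and right multiplication on u act by scalars
  have hleft : ∀ p : P, ∃ c : ℂ, p * u = c • u := by
    intro p
    obtain ⟨c, hc⟩ := hbasic p
    refine ⟨c i, ?_⟩
    have h2 : (p - ∑ l, c l • e l) * u = 0 := hJM _ hc u huM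
    rw [sub_mul, sub_eq_zero] at h2
    rw [h2, Finset.sum_mul]
    rw [Finset.sum_eq_single i]
    · rw [smul_mul_assoc, hu, ← mul_assoc, ← mul_assoc, hidem i]
    · intro l _ hl
      rw [smul_mul_assoc, hu, ← mul_assoc, ← mul_assoc, horth l i hl, zero_mul, zero_mul,
        smul_zero]
    · intro h; exact absurd (Finset.mem_univ i) h
  have hright : ∀ p : P, ∃ c : ℂ, u * p = c • u := by
    intro p
    obtain ⟨c, hc⟩ := hbasic p
    refine ⟨c j, ?_⟩
    have h2 : u * (p - ∑ l, c l • e l) = 0 := hMJ u huM _ hc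
    rw [mul_sub, sub_eq_zero] at h2
    rw [h2, Finset.mul_sum]
    rw [Finset.sum_eq_single j]
    · rw [mul_smul_comm, hu, mul_assoc, hidem j]
    · intro l _ hl
      rw [mul_smul_comm, hu, mul_assoc, horth j l (fun h => hl h.symm), mul_zero, smul_zero]
    · intro h; exact absurd (Finset.mem_univ j) h
  set v : P := f u with hv
  have hvN : v ∈ N := by
    have : v ∈ f '' (M : Set P) := ⟨u, huM, rfl⟩
    rw [hfim] at this
    exact this
  have hv0 : v ≠ 0 := by
    intro h
    apply hu0
    have h0M : (0 : P) ∈ M := M.zero_mem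
    have : f u = f 0 := by rw [map_zero]; exact h
    exact hfinj huM h0M this
  -- key: common scalar for conjugation of u and v
  have hkey : ∀ x y : P, ∃ c : ℂ, x * u * y = c • u ∧ x * v * y = c • v := by
    intro x y
    obtain ⟨c₁, h₁⟩ := hleft x
    obtain ⟨c₂, h₂⟩ := hright y
    refine ⟨c₁ * c₂, ?_, ?_⟩
    · rw [h₁, smul_mul_assoc, h₂, smul_smul]
    · have hxv : x * v = c₁ • v := by
        rw [hv, ← (hfbi u huM x).1, h₁, map_smul]
      have hvy : v * y = c₂ • v := by
        rw [hv, ← (hfbi u huM y).2, h₂, map_smul]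
      rw [hxv, smul_mul_assoc, hvy, smul_smul]
  have huφ : φ u ≠ 0 := by
    intro h
    apply hu0
    apply hrad
    intro x y
    obtain ⟨c, hc, -⟩ := hkey x y
    rw [hc, map_smul, smul_eq_mul, h, mul_zero]
  have hvφ : φ v ≠ 0 := by
    intro h
    apply hv0
    apply hrad
    intro x y
    obtain ⟨c, -, hc⟩ := hkey x y
    rw [hc, map_smul, smul_eq_mul, h, mul_zero]
  set t : ℂ := -(φ u / φ v) with ht
  have htsum : φ u + t * φ v = 0 := by
    rw [ht, neg_mul, div_mul_cancel₀ _ hvφ, add_neg_cancel]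
  have ha : u + t • v = 0 := by
    apply hrad
    intro x y
    have hdist : x * (u + t • v) * y = x * u * y + t • (x * v * y) := by
      rw [mul_add, add_mul, mul_smul_comm, smul_mul_assoc]
    obtain ⟨c, h1, h2⟩ := hkey x y
    rw [hdist, h1, h2, map_add, map_smul, map_smul, map_smul, smul_eq_mul, smul_eq_mul,
      smul_eq_mul]
    calc c * φ u + t * (c * φ v) = c * (φ u + t * φ v) := by ring
      _ = 0 := by rw [htsum, mul_zero]
  have huN : u ∈ N := by
    have hu' : u = -(t • v) := eq_neg_of_add_eq_zero_left ha
    rw [hu']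
    refine neg_mem ?_
    rw [Algebra.smul_def]
    exact N.mul_mem_left _ _ hvN
  have : u ∈ M ⊓ N := (TwoSidedIdeal.mem_inf P).2 ⟨huM, huN⟩
  rw [disjoint_iff.1 (hM.disjoint_of_ne hN hMN)] at this
  exact hu0 ((TwoSidedIdeal.mem_bot P).1 this)
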